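/- Let R : ℂ³ → ℂ and f : ℂ³ → ℂ be twice continuously complex-differentiable (of class C² over ℂ). Write the coordinates of ℂ³ as (w₁,w₃,w₅), let ∂₁,∂₃,∂₅ denote the complex partial derivatives along the three coordinate directions, and set Rᵢ = ∂ᵢR. On the open set {w ∈ ℂ³ : R₃(w) ≠ 0} define, for a differentiable function g, the functions L₁,₃ g = ∂₁g − (R₁/R₃)·∂₃g and L₅,₃ g = ∂₅g − (R₅/R₃)·∂₃g. Then at every point w with R₃(w) ≠ 0 one has L₁,₃(L₅,₃ f)(w) = L₅,₃(L₁,₃ f)(w), i.e., the operators L₁,₃ and L₅,₃ commute. -/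

import Mathlib

/- Context: ℂ³ is modelled as `Fin 3 → ℂ` with coordinates 0 ↦ w₁, 1 ↦ w₃, 2 ↦ w₅.
`pd3 i f x` is the complex partial derivative of `f` along the `i`-th coordinate
direction.  For a function `R` with `R₃ ≠ 0`, the operators are
`L₁,₃ g = ∂₁g − (R₁/R₃)·∂₃g` and `L₅,₃ g = ∂₅g − (R₅/R₃)·∂₃g`. -/

noncomputable section

/-- Complex partial derivative along the `i`-th coordinate direction. -/
def pd3 (i : Fin 3) (f : (Fin 3 → ℂ) → ℂ) (x : Fin 3 → ℂ) : ℂ :=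
  fderiv ℂ f x (Pi.single i 1)

/-- `L₁,₃ g = ∂₁g − (R₁/R₃)·∂₃g`. -/
def L13 (R g : (Fin 3 → ℂ) → ℂ) (x : Fin 3 → ℂ) : ℂ :=
  pd3 0 g x - pd3 0 R x / pd3 1 R x * pd3 1 g x

/-- `L₅,₃ g = ∂₅g − (R₅/R₃)·∂₃g`. -/
def L53 (R g : (Fin 3 → ℂ) → ℂ) (x : Fin 3 → ℂ) : ℂ :=
  pd3 2 g x - pd3 2 R x / pd3 1 R x * pd3 1 g x

lemma pd3_hasFDerivAt (g : (Fin 3 → ℂ) → ℂ) (hg : ContDiff ℂ 2 g) (j : Fin 3) (w : Fin 3 → ℂ) :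
    HasFDerivAt (pd3 j g) ((fderiv ℂ (fderiv ℂ g) w).flip (Pi.single j 1)) w := by
  have h1 : ContDiff ℂ 1 (fderiv ℂ g) := hg.fderiv_right (le_refl _)
  have h2 : HasFDerivAt (fderiv ℂ g) (fderiv ℂ (fderiv ℂ g) w) w :=
    (h1.differentiable one_ne_zero w).hasFDerivAt
  have := h2.clm_apply (hasFDerivAt_const (Pi.single j 1 : Fin 3 → ℂ) w)
  simp at this
  exact this


set_option maxHeartbeats 1000000 in
/-- For `R, f : ℂ³ → ℂ` of class C² over ℂ, the operators `L₁,₃` and `L₅,₃`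
commute at every point where `R₃ ≠ 0`. -/
theorem statement13 (R f : (Fin 3 → ℂ) → ℂ)
    (hR : ContDiff ℂ 2 R) (hf : ContDiff ℂ 2 f) :
    ∀ w : Fin 3 → ℂ, pd3 1 R w ≠ 0 →
      L13 R (L53 R f) w = L53 R (L13 R f) w := by
  intro w hB
  have hA' := pd3_hasFDerivAt R hR 0 w
  have hB' := pd3_hasFDerivAt R hR 1 w
  have hC' := pd3_hasFDerivAt R hR 2 w
  have hf0 := pd3_hasFDerivAt f hf 0 w
  have hf1 := pd3_hasFDerivAt f hf 1 w
  have hf2 := pd3_hasFDerivAt f hf 2 w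
  have hinv : HasFDerivAt (fun x => (pd3 1 R x)⁻¹)
      ((-(pd3 1 R w ^ 2)⁻¹) • ((fderiv ℂ (fderiv ℂ R) w).flip (Pi.single 1 1))) w := by
    have := (hasDerivAt_inv hB).comp_hasFDerivAt w hB'
    exact this
  have hq13 := hf0.sub ((hA'.mul hinv).mul hf1)
  have hq53 := hf2.sub ((hC'.mul hinv).mul hf1)
  have hL13 : HasFDerivAt (L13 R f) _ w :=
    hq13.congr_of_eventuallyEq (Filter.Eventually.of_forall fun x => by
      simp [L13, div_eq_mul_inv])
  have hL53 : HasFDerivAt (L53 R f) _ w :=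
    hq53.congr_of_eventuallyEq (Filter.Eventually.of_forall fun x => by
      simp [L53, div_eq_mul_inv])
  have symf := hf.contDiffAt (x := w) |>.isSymmSndFDerivAt (by simp)
  have symR := hR.contDiffAt (x := w) |>.isSymmSndFDerivAt (by simp)
  show pd3 0 (L53 R f) w - pd3 0 R w / pd3 1 R w * pd3 1 (L53 R f) w =
      pd3 2 (L13 R f) w - pd3 2 R w / pd3 1 R w * pd3 1 (L13 R f) w
  have p1 : pd3 0 (L53 R f) w = fderiv ℂ (L53 R f) w (Pi.single 0 1) := rfl
  have p2 : pd3 1 (L53 R f) w = fderiv ℂ (L53 R f) w (Pi.single 1 1) := rfl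
  have p3 : pd3 2 (L13 R f) w = fderiv ℂ (L13 R f) w (Pi.single 2 1) := rfl
  have p4 : pd3 1 (L13 R f) w = fderiv ℂ (L13 R f) w (Pi.single 1 1) := rfl
  rw [p1, p2, p3, p4, hL53.fderiv, hL13.fderiv]
  simp only [ContinuousLinearMap.sub_apply, ContinuousLinearMap.add_apply,
    ContinuousLinearMap.smul_apply, ContinuousLinearMap.flip_apply, smul_eq_mul, neg_smul,
    ContinuousLinearMap.neg_apply, Pi.mul_apply]
  rw [symf (Pi.single 1 1) (Pi.single 0 1), symf (Pi.single 1 1) (Pi.single 2 1),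
    symf (Pi.single 2 1) (Pi.single 0 1),
    symR (Pi.single 1 1) (Pi.single 0 1), symR (Pi.single 1 1) (Pi.single 2 1),
    symR (Pi.single 2 1) (Pi.single 0 1)]
  set A := pd3 0 R w with hA
  set B := pd3 1 R w with hBv
  set C := pd3 2 R w with hC
  set b := pd3 1 f w with hb
  set F01 := ((fderiv ℂ (fderiv ℂ f) w) (Pi.single 0 1)) (Pi.single 1 1) with h1
  set F02 := ((fderiv ℂ (fderiv ℂ f) w) (Pi.single 0 1)) (Pi.single 2 1) with h2
  set F21 := ((fderiv ℂ (fderiv ℂ f) w) (Pi.single 2 1)) (Pi.single 1 1) with h3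
  set F11 := ((fderiv ℂ (fderiv ℂ f) w) (Pi.single 1 1)) (Pi.single 1 1) with h4
  set R01 := ((fderiv ℂ (fderiv ℂ R) w) (Pi.single 0 1)) (Pi.single 1 1) with h5
  set R02 := ((fderiv ℂ (fderiv ℂ R) w) (Pi.single 0 1)) (Pi.single 2 1) with h6
  set R21 := ((fderiv ℂ (fderiv ℂ R) w) (Pi.single 2 1)) (Pi.single 1 1) with h7
  set R11 := ((fderiv ℂ (fderiv ℂ R) w) (Pi.single 1 1)) (Pi.single 1 1) with h8
  ring

end
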